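/- With C(m,k) = (1 + 1/k)^{(m−k)/2} · m^m/(m−k)^{m−k} · ((m−k)!/m!)^{1/2} and k = k(m) = ⌈√m/√(log m)⌉, for every κ₂ > 1 there exists κ₁ > 0 such that C(m, k(m)) ≤ κ₁ · exp(κ₂ √(m log m)) for all m ≥ 2. -/

import Mathlib

open Real

private lemma fact_upper_aux : ∀ n : ℕ, 1 ≤ n →
    (n.factorial : ℝ) * Real.exp n ≤ Real.exp 1 * (n : ℝ) ^ (n + 1) := by
  intro n hn
  induction n with
  | zero => omega
  | succ n ih =>
    rcases Nat.eq_or_lt_of_le hn with h | h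
    · have hn0 : n = 0 := by omega
      subst hn0
      simp [Nat.factorial]
    · have hn1 : 1 ≤ n := by omega
      have ih' := ih hn1
      have hnpos : (0 : ℝ) < n := by exact_mod_cast hn1
      have hu : (0:ℝ) < (n:ℝ) + 1 := by positivity
      have key : Real.exp 1 * (n : ℝ) ^ (n + 1) ≤ ((n : ℝ) + 1) ^ (n + 1) := by
        have h1 : (n : ℝ) * Real.exp (1 / ((n:ℝ) + 1)) ≤ (n : ℝ) + 1 := by
          have h2 : 1 - 1/((n:ℝ)+1) ≤ Real.exp (-(1/((n:ℝ)+1))) := by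
            have := Real.add_one_le_exp (-(1/((n:ℝ)+1))); linarith
          have h3 : (n:ℝ) ≤ ((n:ℝ)+1) * Real.exp (-(1/((n:ℝ)+1))) := by
            have := mul_le_mul_of_nonneg_left h2 hu.le
            calc (n:ℝ) = ((n:ℝ)+1) * (1 - 1/((n:ℝ)+1)) := by field_simp; ring
              _ ≤ _ := this
          have h4 : Real.exp (1/((n:ℝ)+1)) * Real.exp (-(1/((n:ℝ)+1))) = 1 := by
            rw [← Real.exp_add]; norm_num
          nlinarith [mul_le_mul_of_nonneg_right h3 (Real.exp_pos (1/((n:ℝ)+1))).le,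
            Real.exp_pos (1/((n:ℝ)+1)), Real.exp_pos (-(1/((n:ℝ)+1)))]
        calc Real.exp 1 * (n : ℝ) ^ (n + 1)
            = ((n : ℝ) * Real.exp (1 / ((n:ℝ) + 1))) ^ (n + 1) := by
              rw [mul_pow, ← Real.exp_nat_mul]
              have hne : ((n : ℝ) + 1) ≠ 0 := by positivity
              rw [mul_comm]
              congr 2
              push_cast
              field_simp
          _ ≤ ((n : ℝ) + 1) ^ (n + 1) := by
              apply pow_le_pow_left₀ (by positivity) h1
      calc ((n + 1).factorial : ℝ) * Real.exp ((n+1 : ℕ) : ℝ)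
          = ((n : ℝ) + 1) * Real.exp 1 * ((n.factorial : ℝ) * Real.exp n) := by
            rw [Nat.factorial_succ]
            push_cast [Real.exp_add]
            ring
        _ ≤ ((n : ℝ) + 1) * Real.exp 1 * (Real.exp 1 * (n : ℝ) ^ (n + 1)) := by
            apply mul_le_mul_of_nonneg_left ih' (by positivity)
        _ ≤ ((n : ℝ) + 1) * Real.exp 1 * ((n : ℝ) + 1) ^ (n + 1) := by
            apply mul_le_mul_of_nonneg_left key (by positivity)
        _ = Real.exp 1 * ((n : ℝ) + 1) ^ (n + 2) := by ring
        _ = Real.exp 1 * ((n + 1 : ℕ) : ℝ) ^ (n + 1 + 1) := by push_cast; ring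

private lemma log_fact_upper (n : ℕ) (hn : 1 ≤ n) :
    Real.log n.factorial ≤ 1 + ((n:ℝ) + 1) * Real.log n - n := by
  have h := fact_upper_aux n hn
  have hn0 : (0:ℝ) < n := by exact_mod_cast hn
  have hf0 : (0:ℝ) < n.factorial := by exact_mod_cast n.factorial_pos
  have hlog := Real.log_le_log (by positivity) h
  rw [Real.log_mul hf0.ne' (Real.exp_pos _).ne', Real.log_exp,
    Real.log_mul (Real.exp_pos _).ne' (by positivity), Real.log_exp, Real.log_pow] at hlog
  push_cast at hlog
  linarith

private lemma log_fact_lower (m : ℕ) (hm : 1 ≤ m) :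
    (m:ℝ) * Real.log m - m ≤ Real.log m.factorial := by
  have hm0 : (0:ℝ) < m := by exact_mod_cast hm
  have hf0 : (0:ℝ) < m.factorial := by exact_mod_cast m.factorial_pos
  have h := Real.pow_div_factorial_le_exp (m:ℝ) (le_of_lt hm0) m
  rw [div_le_iff₀ hf0] at h
  have hlog := Real.log_le_log (by positivity) h
  rw [Real.log_pow, Real.log_mul (Real.exp_pos _).ne' hf0.ne', Real.log_exp] at hlog
  linarith

set_option maxHeartbeats 2000000 in
private lemma bh_main_case (κ₂ ε a : ℝ) (hκ₂ : 1 < κ₂) (hεdef : ε = κ₂ - 1) (hadef : a = 4 / ε ^ 2)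
    (N : ℕ) (hNdef : N = max ⌈(4:ℝ) * a ^ 2⌉₊ ⌈Real.exp (2 / ε)⌉₊ + 3)
    (m : ℕ) (hm3 : 3 ≤ m) (k : ℕ) (hk : k = ⌈Real.sqrt m / Real.sqrt (Real.log m)⌉₊) :
    (1 + 1 / (k : ℝ)) ^ (((m : ℝ) - k) / 2) *
        ((m : ℝ) ^ (m : ℝ) / ((m : ℝ) - k) ^ ((m : ℝ) - k)) *
        (((m - k).factorial : ℝ) / (m.factorial : ℝ)) ^ ((1 : ℝ) / 2) ≤
      Real.exp (3 * (N:ℝ)) * Real.exp (κ₂ * Real.sqrt (m * Real.log m)) := by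
  have hε0 : 0 < ε := by rw [hεdef]; linarith
  have ha0 : 0 < a := by rw [hadef]; positivity
  set M : ℝ := (m:ℝ) with hMdef
  clear_value M
  have hM3 : (3:ℝ) ≤ M := by rw [hMdef]; exact_mod_cast hm3
  have hM0 : (0:ℝ) < M := by linarith
  set L : ℝ := Real.log M with hLdef
  clear_value L
  have hL1 : 1 ≤ L := by
    rw [hLdef, Real.le_log_iff_exp_le hM0]
    have := Real.exp_one_lt_d9; linarith
  have hL0 : 0 < L := by linarith
  have hsM : 0 < Real.sqrt M := Real.sqrt_pos.mpr hM0
  have hsL : 0 < Real.sqrt L := Real.sqrt_pos.mpr hL0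
  set x : ℝ := Real.sqrt M / Real.sqrt L with hxdef
  clear_value x
  have hx0 : 0 < x := by rw [hxdef]; positivity
  set t : ℝ := Real.sqrt (M * L) with htdef
  clear_value t
  have ht : t = Real.sqrt M * Real.sqrt L := by rw [htdef]; exact Real.sqrt_mul hM0.le L
  have ht0 : 0 ≤ t := by rw [htdef]; exact Real.sqrt_nonneg _
  have hLsq : Real.sqrt L * Real.sqrt L = L := Real.mul_self_sqrt hL0.le
  have hMsq : Real.sqrt M * Real.sqrt M = M := Real.mul_self_sqrt hM0.le
  have hxL : x * L = t := by
    rw [hxdef, ht, div_mul_eq_mul_div, div_eq_iff hsL.ne', mul_assoc, hLsq]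
  have hMx : M / x = t := by
    rw [hxdef, div_div_eq_mul_div, ht, div_eq_iff hsM.ne']
    linear_combination (-Real.sqrt L) * hMsq
  have hkx : x ≤ (k:ℝ) := by rw [hk]; exact Nat.le_ceil x
  have hkx1 : (k:ℝ) < x + 1 := by rw [hk]; exact Nat.ceil_lt_add_one hx0.le
  have hk0 : (0:ℝ) < k := lt_of_lt_of_le hx0 hkx
  have hsL1 : 1 ≤ Real.sqrt L := by
    rw [show (1:ℝ) = Real.sqrt 1 by simp]; exact Real.sqrt_le_sqrt hL1
  have hxM : x ≤ Real.sqrt M := by rw [hxdef]; exact div_le_self hsM.le hsL1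
  have hsqM : Real.sqrt M ≤ M - 1 := by
    have h1 : M ≤ (M - 1)^2 := by nlinarith
    calc Real.sqrt M ≤ Real.sqrt ((M-1)^2) := Real.sqrt_le_sqrt h1
      _ = M - 1 := Real.sqrt_sq (by linarith)
  have hkm : k < m := by
    have h : (k:ℝ) < M := by linarith
    rw [hMdef] at h
    exact_mod_cast h
  have hn1 : 1 ≤ m - k := by omega
  set s : ℝ := M - (k:ℝ) with hsdef
  clear_value s
  have hcast : ((m - k : ℕ) : ℝ) = s := by
    rw [hsdef, hMdef, Nat.cast_sub hkm.le]
  have hs1 : 1 ≤ s := by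
    have h : (k:ℝ) + 1 ≤ M := by rw [hMdef]; exact_mod_cast hkm
    rw [hsdef]; linarith
  have hs0 : 0 < s := by linarith
  have hsM' : s ≤ M := by rw [hsdef]; linarith
  -- Factor A
  have hA : (1 + 1 / (k : ℝ)) ^ (s / 2) ≤ Real.exp (t / 2) := by
    have hb : (0:ℝ) < 1 + 1/(k:ℝ) := by positivity
    rw [Real.rpow_def_of_pos hb]
    apply Real.exp_le_exp.mpr
    have hlogb : Real.log (1 + 1/(k:ℝ)) ≤ 1/(k:ℝ) := by
      have := Real.log_le_sub_one_of_pos hb; linarith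
    have h1 : Real.log (1 + 1/(k:ℝ)) * (s/2) ≤ (1/(k:ℝ)) * (s/2) :=
      mul_le_mul_of_nonneg_right hlogb (by linarith)
    have h2 : (1/(k:ℝ)) * (s/2) ≤ (1/x) * (M/2) := by
      apply mul_le_mul (one_div_le_one_div_of_le hx0 hkx) (by linarith) (by linarith) (by positivity)
    have h3 : (1/x) * (M/2) = t/2 := by
      rw [← hMx]; ring
    linarith
  -- Factor B
  have hB : M ^ M / s ^ s = Real.exp (M * L - s * Real.log s) := by
    rw [Real.rpow_def_of_pos hM0, Real.rpow_def_of_pos hs0, ← Real.exp_sub, hLdef]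
    congr 1; ring
  -- Factor C
  have hfd0 : (0:ℝ) < ((m-k).factorial : ℝ) / (m.factorial : ℝ) := by
    have h1 : (0:ℝ) < ((m-k).factorial : ℝ) := by exact_mod_cast (m-k).factorial_pos
    have h2 : (0:ℝ) < (m.factorial : ℝ) := by exact_mod_cast m.factorial_pos
    positivity
  have hC : (((m - k).factorial : ℝ) / (m.factorial : ℝ)) ^ ((1:ℝ)/2) ≤
      Real.exp ((1/2) * (1 + Real.log s + s * Real.log s - s - (M * L - M))) := by
    rw [Real.rpow_def_of_pos hfd0]
    apply Real.exp_le_exp.mpr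
    have h1 : (0:ℝ) < ((m-k).factorial : ℝ) := by exact_mod_cast (m-k).factorial_pos
    have h2 : (0:ℝ) < (m.factorial : ℝ) := by exact_mod_cast m.factorial_pos
    rw [Real.log_div h1.ne' h2.ne']
    have hup := log_fact_upper (m - k) hn1
    rw [hcast] at hup
    have hlow := log_fact_lower m (by omega)
    rw [← hMdef, ← hLdef] at hlow
    have hd : Real.log ((m-k).factorial : ℝ) - Real.log (m.factorial : ℝ) ≤
        (1 + Real.log s + s * Real.log s - s - (M * L - M)) := by linarith
    linarith
  -- combine
  have hApos : (0:ℝ) < (1 + 1 / (k : ℝ)) ^ (s / 2) := Real.rpow_pos_of_pos (by positivity) _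
  have hBpos : (0:ℝ) < M ^ M / s ^ s := by
    apply div_pos (Real.rpow_pos_of_pos hM0 _) (Real.rpow_pos_of_pos hs0 _)
  have hCpos : (0:ℝ) < (((m - k).factorial : ℝ) / (m.factorial : ℝ)) ^ ((1:ℝ)/2) :=
    Real.rpow_pos_of_pos hfd0 _
  have hcomb : (1 + 1 / (k : ℝ)) ^ (s / 2) * (M ^ M / s ^ s) *
      (((m - k).factorial : ℝ) / (m.factorial : ℝ)) ^ ((1:ℝ)/2) ≤
      Real.exp (t/2 + (M * L - s * Real.log s) +
        (1/2) * (1 + Real.log s + s * Real.log s - s - (M * L - M))) := by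
    rw [Real.exp_add, Real.exp_add]
    apply mul_le_mul _ hC hCpos.le (by positivity)
    apply mul_le_mul hA (le_of_eq hB) hBpos.le (Real.exp_pos _).le
  -- bound the exponent
  have g1 : M * L - s * Real.log s ≤ (k:ℝ) * L + (k:ℝ) := by
    have hlogdiv : L - Real.log s ≤ M/s - 1 := by
      have h := Real.log_le_sub_one_of_pos (div_pos hM0 hs0)
      rw [Real.log_div hM0.ne' hs0.ne'] at h
      rw [hLdef]; linarith
    have h2 : s * (L - Real.log s) ≤ s * (M/s - 1) :=
      mul_le_mul_of_nonneg_left hlogdiv hs0.le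
    have h3 : s * (M/s - 1) = M - s := by field_simp
    have h4 : M - s = (k:ℝ) := by rw [hsdef]; ring
    have h5 : M * L - s * Real.log s = (k:ℝ) * L + s * (L - Real.log s) := by
      rw [hsdef]; ring
    linarith
  have g2 : Real.log s ≤ L := by
    rw [hLdef]; exact Real.log_le_log hs0 hsM'
  have g6 : (k:ℝ) * L ≤ t + L := by
    have h1 := mul_le_mul_of_nonneg_right hkx1.le hL0.le
    have h2 : (x + 1) * L = t + L := by rw [← hxL]; ring
    linarith
  -- case analysis for the tail
  have gfinal : L + x + 3/2 ≤ ε * t + 3 * (N:ℝ) := by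
    have hN3 : (3:ℝ) ≤ (N:ℝ) := by
      have : 3 ≤ N := by rw [hNdef]; omega
      exact_mod_cast this
    rcases le_or_gt m N with hsmall | hlarge
    · have hMN : M ≤ (N:ℝ) := by rw [hMdef]; exact_mod_cast hsmall
      have hLM : L ≤ M - 1 := by
        have := Real.log_le_sub_one_of_pos hM0; rw [← hLdef] at this; exact this
      have hxN : x ≤ M := le_trans hxM (by linarith)
      linarith [mul_nonneg hε0.le ht0]
    · have hNM : (N:ℝ) ≤ M := by rw [hMdef]; exact_mod_cast hlarge.le
      have hexpa : Real.exp (2/ε) ≤ M := by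
        calc Real.exp (2/ε) ≤ (⌈Real.exp (2/ε)⌉₊ : ℝ) := Nat.le_ceil _
          _ ≤ (N:ℝ) := by
              have : ⌈Real.exp (2/ε)⌉₊ ≤ N := by rw [hNdef]; omega
              exact_mod_cast this
          _ ≤ M := hNM
      have hLε : 2/ε ≤ L := by
        rw [hLdef, Real.le_log_iff_exp_le hM0]; exact hexpa
      have hεL : 2 ≤ ε * L := by
        rw [div_le_iff₀ hε0] at hLε; linarith
      have haM : 4 * a^2 ≤ M := by
        calc (4:ℝ) * a^2 ≤ (⌈(4:ℝ) * a^2⌉₊ : ℝ) := Nat.le_ceil _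
          _ ≤ (N:ℝ) := by
              have : ⌈(4:ℝ)*a^2⌉₊ ≤ N := by rw [hNdef]; omega
              exact_mod_cast this
          _ ≤ M := hNM
      -- x ≤ (ε/2) t
      have hbx : x ≤ (ε/2) * t := by
        rw [hxdef, div_le_iff₀ hsL, ht]
        have e : (ε/2) * (Real.sqrt M * Real.sqrt L) * Real.sqrt L
            = Real.sqrt M * ((ε/2) * L) := by
          linear_combination (ε/2) * Real.sqrt M * hLsq
        rw [e]
        calc Real.sqrt M = Real.sqrt M * 1 := by ring
          _ ≤ Real.sqrt M * ((ε/2) * L) :=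
              mul_le_mul_of_nonneg_left (by linarith) hsM.le
      -- L ≤ (ε/2) t
      have hbL : L ≤ (ε/2) * t := by
        have step1 : L ≤ M / a := by
          have e1 : Real.log (M/(2*a)) ≤ M/(2*a) - 1 :=
            Real.log_le_sub_one_of_pos (by positivity)
          have e2 : Real.log (2*a) ≤ 2*a - 1 :=
            Real.log_le_sub_one_of_pos (by positivity)
          have e3 : L = Real.log (M/(2*a)) + Real.log (2*a) := by
            rw [hLdef, ← Real.log_mul (by positivity) (by positivity)]
            congr 1; field_simp
          have e4 : 2*a ≤ M/(2*a) := by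
            rw [le_div_iff₀ (by positivity)]
            calc 2*a*(2*a) = 4*a^2 := by ring
              _ ≤ M := haM
          have e5 : M/(2*a) + M/(2*a) = M/a := by ring
          linarith
        have step2 : Real.sqrt L ≤ (ε/2) * Real.sqrt M := by
          have hMa : M / a = (ε/2)^2 * M := by rw [hadef]; field_simp; ring
          have : L ≤ (ε/2)^2 * M := by rw [← hMa]; exact step1
          calc Real.sqrt L ≤ Real.sqrt ((ε/2)^2 * M) := Real.sqrt_le_sqrt this
            _ = (ε/2) * Real.sqrt M := by
                rw [Real.sqrt_mul (by positivity), Real.sqrt_sq (by positivity)]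
        calc L = Real.sqrt L * Real.sqrt L := hLsq.symm
          _ ≤ ((ε/2) * Real.sqrt M) * Real.sqrt L := mul_le_mul_of_nonneg_right step2 hsL.le
          _ = (ε/2) * t := by rw [ht]; ring
      linarith
  -- final assembly
  calc (1 + 1 / (k : ℝ)) ^ (s / 2) * (M ^ M / s ^ s) *
      (((m - k).factorial : ℝ) / (m.factorial : ℝ)) ^ ((1:ℝ)/2)
      ≤ Real.exp (t/2 + (M * L - s * Real.log s) +
        (1/2) * (1 + Real.log s + s * Real.log s - s - (M * L - M))) := hcomb
    _ ≤ Real.exp (3 * (N:ℝ) + κ₂ * t) := by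
        apply Real.exp_le_exp.mpr
        have hMs : M - s = (k:ℝ) := by rw [hsdef]; ring
        have hkx1' : (k:ℝ) ≤ x + 1 := hkx1.le
        have hεt : ε * t = κ₂ * t - t := by rw [hεdef]; ring
        linarith [g1, g2, g6, gfinal]
    _ = Real.exp (3 * (N:ℝ)) * Real.exp (κ₂ * t) := by rw [Real.exp_add]

private lemma bh_ceil_two : ⌈Real.sqrt 2 / Real.sqrt (Real.log 2)⌉₊ = 2 := by
  have hl2a := Real.log_two_gt_d9
  have hl2b := Real.log_two_lt_d9
  have hl2pos : (0:ℝ) < Real.log 2 := by linarith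
  have hsl : (0:ℝ) < Real.sqrt (Real.log 2) := Real.sqrt_pos.mpr hl2pos
  rw [Nat.ceil_eq_iff (by norm_num)]
  push_cast
  constructor
  · rw [lt_div_iff₀ hsl, one_mul]
    exact Real.sqrt_lt_sqrt hl2pos.le (by linarith)
  · rw [div_le_iff₀ hsl]
    have h4 : (2:ℝ) * Real.sqrt (Real.log 2) = Real.sqrt (4 * Real.log 2) := by
      rw [show (4:ℝ) = 2^2 by norm_num, Real.sqrt_mul (by positivity), Real.sqrt_sq (by norm_num)]
    rw [h4]
    exact Real.sqrt_le_sqrt (by linarith)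

private lemma bh_lhs_two :
    (1 + 1 / ((2:ℕ) : ℝ)) ^ ((((2:ℕ) : ℝ) - ((2:ℕ):ℝ)) / 2) *
        (((2:ℕ) : ℝ) ^ ((2:ℕ) : ℝ) / (((2:ℕ) : ℝ) - ((2:ℕ):ℝ)) ^ (((2:ℕ) : ℝ) - ((2:ℕ):ℝ))) *
        ((((2:ℕ) - (2:ℕ)).factorial : ℝ) / ((2:ℕ).factorial : ℝ)) ^ ((1 : ℝ) / 2) ≤ 4 := by
  have h0 : ((2:ℕ):ℝ) - ((2:ℕ):ℝ) = 0 := by norm_num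
  rw [h0, zero_div, Real.rpow_zero, Real.rpow_zero]
  have hr : ((2:ℕ):ℝ) ^ ((2:ℕ):ℝ) = 4 := by
    rw [Real.rpow_natCast]; norm_num
  rw [hr]
  norm_num [Nat.factorial]
  exact Real.rpow_le_one (by norm_num) (by norm_num) (by norm_num)

/-- With `k(m) = ⌈√m/√(log m)⌉`, the factor `C(m, k(m))` is subexponential:
for every `κ₂ > 1` it is at most `κ₁ · exp(κ₂ √(m log m))`. -/
theorem polynomial_bh_subexponential_factor (κ₂ : ℝ) (hκ₂ : 1 < κ₂) :
    ∃ κ₁ : ℝ, 0 < κ₁ ∧ ∀ m : ℕ, 2 ≤ m →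
      ∀ k : ℕ, k = ⌈Real.sqrt m / Real.sqrt (Real.log m)⌉₊ →
        (1 + 1 / (k : ℝ)) ^ (((m : ℝ) - k) / 2) *
            ((m : ℝ) ^ (m : ℝ) / ((m : ℝ) - k) ^ ((m : ℝ) - k)) *
            (((m - k).factorial : ℝ) / (m.factorial : ℝ)) ^ ((1 : ℝ) / 2) ≤
          κ₁ * Real.exp (κ₂ * Real.sqrt (m * Real.log m)) := by
  set ε : ℝ := κ₂ - 1 with hεdef
  have hε0 : 0 < ε := by rw [hεdef]; linarith
  set a : ℝ := 4 / ε ^ 2 with hadef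
  set N : ℕ := max ⌈(4:ℝ) * a ^ 2⌉₊ ⌈Real.exp (2 / ε)⌉₊ + 3 with hNdef
  have hN3 : 3 ≤ N := by rw [hNdef]; omega
  refine ⟨Real.exp (3 * (N:ℝ)), Real.exp_pos _, ?_⟩
  intro m hm k hk
  rcases Nat.lt_or_ge m 3 with h2 | hm3
  · -- m = 2
    have hm2 : m = 2 := by omega
    subst hm2
    have hexp1 : (1:ℝ) ≤ Real.exp (κ₂ * Real.sqrt ((2:ℕ) * Real.log (2:ℕ))) :=
      Real.one_le_exp (mul_nonneg (by linarith) (Real.sqrt_nonneg _))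
    have hexpN : (4:ℝ) ≤ Real.exp (3 * (N:ℝ)) := by
      have h1 : (4:ℝ) ≤ Real.exp 3 := by
        have := Real.add_one_le_exp (3:ℝ); linarith
      have h2 : Real.exp 3 ≤ Real.exp (3 * (N:ℝ)) := by
        apply Real.exp_le_exp.mpr
        have h3 : (3:ℝ) ≤ (N:ℝ) := by exact_mod_cast hN3
        nlinarith
      linarith
    push_cast at hk
    rw [bh_ceil_two] at hk
    subst hk
    calc (1 + 1 / ((2:ℕ) : ℝ)) ^ ((((2:ℕ) : ℝ) - ((2:ℕ):ℝ)) / 2) *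
          (((2:ℕ) : ℝ) ^ ((2:ℕ) : ℝ) / (((2:ℕ) : ℝ) - ((2:ℕ):ℝ)) ^ (((2:ℕ) : ℝ) - ((2:ℕ):ℝ))) *
          ((((2:ℕ) - (2:ℕ)).factorial : ℝ) / ((2:ℕ).factorial : ℝ)) ^ ((1 : ℝ) / 2)
        ≤ 4 := bh_lhs_two
      _ = 4 * 1 := by norm_num
      _ ≤ Real.exp (3 * (N:ℝ)) * Real.exp (κ₂ * Real.sqrt ((2:ℕ) * Real.log (2:ℕ))) :=
          mul_le_mul hexpN hexp1 (by norm_num) (Real.exp_pos _).le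
  · exact bh_main_case κ₂ ε a hκ₂ hεdef hadef N hNdef m hm3 k hk
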